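/- Let H : X → X be a bounded, self-adjoint linear operator with ⟨Hx, x⟩ ≥ c‖x‖² for some c > 0 (hence H is invertible), and let φ : X → ℝ ∪ {+∞} be proper, convex and lower semicontinuous. If p₁ minimizes x ↦ φ(x) + ½⟨H(x − z₁), x − z₁⟩ over X and p₂ minimizes x ↦ φ(x) + ½⟨H(x − z₂), x − z₂⟩ over X, then ‖p₁ − p₂‖ ≤ √(‖H‖‖H⁻¹‖) · ‖z₁ − z₂‖. In other words, the proximity operator prox_φ^H is Lipschitz with constant √(‖H‖‖H⁻¹‖) with respect to the norm of X. -/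

import Mathlib

open scoped RealInnerProductSpace
open ContinuousLinearMap

/-- The proximity operator `prox_φ^H` associated to a proper convex lower semicontinuous
function `φ : X → ℝ ∪ {+∞}` with respect to the metric induced by a bounded self-adjoint
coercive operator `H` is Lipschitz with constant `√(‖H‖‖H⁻¹‖)`:
if `p₁ = prox_φ^H(z₁)` and `p₂ = prox_φ^H(z₂)`, then
`‖p₁ − p₂‖ ≤ √(‖H‖‖H⁻¹‖)·‖z₁ − z₂‖`. -/
theorem stmt_6 {X : Type*} [NormedAddCommGroup X] [InnerProductSpace ℝ X] [CompleteSpace X]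
    (H : X →L[ℝ] X)
    (hHsa : ∀ x y : X, ⟪H x, y⟫ = ⟪x, H y⟫)
    (hHcoer : ∃ c : ℝ, 0 < c ∧ ∀ x : X, c * ‖x‖ ^ 2 ≤ ⟪H x, x⟫)
    (φ : X → WithTop ℝ)
    (hproper : ∃ x, φ x ≠ ⊤)
    (hconv : ∀ x y : X, ∀ a b : ℝ, 0 ≤ a → 0 ≤ b → a + b = 1 →
      φ (a • x + b • y) ≤ (a : WithTop ℝ) * φ x + (b : WithTop ℝ) * φ y)
    (hlsc : LowerSemicontinuous φ)
    (z₁ z₂ p₁ p₂ : X)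
    (hp₁ : ∀ x : X, φ p₁ + ((2⁻¹ * ⟪H (p₁ - z₁), p₁ - z₁⟫ : ℝ) : WithTop ℝ)
        ≤ φ x + ((2⁻¹ * ⟪H (x - z₁), x - z₁⟫ : ℝ) : WithTop ℝ))
    (hp₂ : ∀ x : X, φ p₂ + ((2⁻¹ * ⟪H (p₂ - z₂), p₂ - z₂⟫ : ℝ) : WithTop ℝ)
        ≤ φ x + ((2⁻¹ * ⟪H (x - z₂), x - z₂⟫ : ℝ) : WithTop ℝ)) :
    ∀ Hinv : X →L[ℝ] X, Hinv ∘L H = 1 → H ∘L Hinv = 1 →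
      ‖p₁ - p₂‖ ≤ Real.sqrt (‖H‖ * ‖Hinv‖) * ‖z₁ - z₂‖ := by
  intro Hinv hleft hright
  obtain ⟨c, hc, hcoer⟩ := hHcoer
  have hsymm : ∀ u v : X, ⟪H u, v⟫ = ⟪H v, u⟫ := fun u v => by
    rw [hHsa u v, real_inner_comm]
  have hq_nonneg : ∀ u : X, 0 ≤ ⟪H u, u⟫ := fun u =>
    le_trans (by positivity) (hcoer u)
  have hexp : ∀ (w v : X) (t : ℝ),
      ⟪H (w + t • v), w + t • v⟫ = ⟪H w, w⟫ + 2 * t * ⟪H w, v⟫ + t ^ 2 * ⟪H v, v⟫ := by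
    intro w v t
    simp only [map_add, map_smul, inner_add_left, inner_add_right,
      real_inner_smul_left, real_inner_smul_right]
    rw [hsymm v w]; ring
  have hCS : ∀ u v : X, ⟪H u, v⟫ ^ 2 ≤ ⟪H u, u⟫ * ⟪H v, v⟫ := by
    intro u v
    rcases eq_or_ne v 0 with rfl | hv
    · simp
    · have hnv : 0 < ‖v‖ := norm_pos_iff.mpr hv
      have hqv : 0 < ⟪H v, v⟫ := lt_of_lt_of_le (by positivity) (hcoer v)
      have hdisc : discrim (⟪H v, v⟫) (2 * ⟪H u, v⟫) (⟪H u, u⟫) ≤ 0 := by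
        apply discrim_le_zero
        intro t
        have h := hq_nonneg (u + t • v)
        rw [hexp u v t] at h
        nlinarith [h]
      rw [discrim] at hdisc
      nlinarith [hdisc]
  -- finiteness of φ at the minimizers
  obtain ⟨x₀, hx₀⟩ := hproper
  have hfin : ∀ (p z : X), (∀ x : X, φ p + ((2⁻¹ * ⟪H (p - z), p - z⟫ : ℝ) : WithTop ℝ)
        ≤ φ x + ((2⁻¹ * ⟪H (x - z), x - z⟫ : ℝ) : WithTop ℝ)) → φ p ≠ ⊤ := by
    intro p z hp hcon
    have h := hp x₀
    rw [hcon, top_add] at h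
    have h2 : φ x₀ + ((2⁻¹ * ⟪H (x₀ - z), x₀ - z⟫ : ℝ) : WithTop ℝ) = ⊤ := top_le_iff.mp h
    rcases WithTop.add_eq_top.mp h2 with h3 | h3
    · exact hx₀ h3
    · exact WithTop.coe_ne_top h3
  obtain ⟨a₁, ha₁⟩ := WithTop.ne_top_iff_exists.mp (hfin p₁ z₁ hp₁)
  obtain ⟨a₂, ha₂⟩ := WithTop.ne_top_iff_exists.mp (hfin p₂ z₂ hp₂)
  -- variational inequality
  have hvar : ∀ (p z : X) (a : ℝ), (↑a = φ p) →
      (∀ x : X, φ p + ((2⁻¹ * ⟪H (p - z), p - z⟫ : ℝ) : WithTop ℝ)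
        ≤ φ x + ((2⁻¹ * ⟪H (x - z), x - z⟫ : ℝ) : WithTop ℝ)) →
      ∀ (p' : X) (a' : ℝ), (↑a' = φ p') → ∀ t : ℝ, 0 < t → t ≤ 1 →
      t * (a - a') ≤ t * ⟪H (p - z), p' - p⟫ + t ^ 2 / 2 * ⟪H (p' - p), p' - p⟫ := by
    intro p z a ha hp p' a' ha' t ht0 ht1
    have h1 := hp ((1 - t) • p + t • p')
    have hconvx := hconv p p' (1 - t) t (by linarith) (le_of_lt ht0) (by ring)
    rw [← ha, ← ha', ← WithTop.coe_mul, ← WithTop.coe_mul, ← WithTop.coe_add] at hconvx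
    rw [← ha] at h1
    have hxz : (1 - t) • p + t • p' - z = (p - z) + t • (p' - p) := by module
    rw [hxz, hexp (p - z) (p' - p) t] at h1
    have hreal : a + 2⁻¹ * ⟪H (p - z), p - z⟫ ≤
        ((1 - t) * a + t * a') +
          2⁻¹ * (⟪H (p - z), p - z⟫ + 2 * t * ⟪H (p - z), p' - p⟫
            + t ^ 2 * ⟪H (p' - p), p' - p⟫) := by
      have := calc ((a + 2⁻¹ * ⟪H (p - z), p - z⟫ : ℝ) : WithTop ℝ)
          = (a : WithTop ℝ) + ((2⁻¹ * ⟪H (p - z), p - z⟫ : ℝ) : WithTop ℝ) :=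
            WithTop.coe_add _ _
        _ ≤ φ ((1 - t) • p + t • p')
            + ((2⁻¹ * (⟪H (p - z), p - z⟫ + 2 * t * ⟪H (p - z), p' - p⟫
              + t ^ 2 * ⟪H (p' - p), p' - p⟫) : ℝ) : WithTop ℝ) := h1
        _ ≤ (((1 - t) * a + t * a' : ℝ) : WithTop ℝ)
            + ((2⁻¹ * (⟪H (p - z), p - z⟫ + 2 * t * ⟪H (p - z), p' - p⟫
              + t ^ 2 * ⟪H (p' - p), p' - p⟫) : ℝ) : WithTop ℝ) :=
            add_le_add_left hconvx _
        _ = (((1 - t) * a + t * a' + 2⁻¹ * (⟪H (p - z), p - z⟫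
              + 2 * t * ⟪H (p - z), p' - p⟫
              + t ^ 2 * ⟪H (p' - p), p' - p⟫) : ℝ) : WithTop ℝ) :=
            (WithTop.coe_add _ _).symm
      exact_mod_cast this
    nlinarith [hreal]
  set u := p₁ - p₂ with hu
  have hqneg : ⟪H (p₂ - p₁), p₂ - p₁⟫ = ⟪H u, u⟫ := by
    have : p₂ - p₁ = -u := by rw [hu]; abel
    rw [this]; simp
  have hmain : ⟪H u, u⟫ ≤ ⟪H (z₁ - z₂), u⟫ := by
    have hstep : ∀ t : ℝ, 0 < t → t ≤ 1 →
        (1 - t) * ⟪H u, u⟫ ≤ ⟪H (z₁ - z₂), u⟫ := by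
      intro t ht0 ht1
      have h1 := hvar p₁ z₁ a₁ ha₁ hp₁ p₂ a₂ ha₂ t ht0 ht1
      have h2 := hvar p₂ z₂ a₂ ha₂ hp₂ p₁ a₁ ha₁ t ht0 ht1
      have e1 : ⟪H (p₁ - z₁), p₂ - p₁⟫ + ⟪H (p₂ - z₂), p₁ - p₂⟫
          = -⟪H u, u⟫ + ⟪H (z₁ - z₂), u⟫ := by
        simp only [hu, map_sub, inner_sub_left, inner_sub_right]
        ring
      have e2 : ⟪H (p₁ - p₂), p₁ - p₂⟫ = ⟪H u, u⟫ := by rw [← hu]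
      -- add h1 and h2, divide by t
      have hsum : 0 ≤ t * (-⟪H u, u⟫ + ⟪H (z₁ - z₂), u⟫) + t ^ 2 * ⟪H u, u⟫ := by
        rw [hqneg] at h1
        rw [e2] at h2
        nlinarith [h1, h2, e1]
      nlinarith [hsum, ht0, mul_pos ht0 ht0]
    refine le_of_forall_pos_le_add ?_
    intro ε hε
    have hq := hq_nonneg u
    set t := min 1 (ε / (⟪H u, u⟫ + 1)) with htdef
    have ht0 : 0 < t := lt_min one_pos (div_pos hε (by linarith))
    have ht1 : t ≤ 1 := min_le_left _ _
    have hstep' := hstep t ht0 ht1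
    have hle : t ≤ ε / (⟪H u, u⟫ + 1) := min_le_right _ _
    have h4 : t * ⟪H u, u⟫ ≤ ε := by
      calc t * ⟪H u, u⟫ ≤ (ε / (⟪H u, u⟫ + 1)) * ⟪H u, u⟫ := by
            apply mul_le_mul_of_nonneg_right hle hq
        _ ≤ ε := by
            rw [div_mul_eq_mul_div, div_le_iff₀ (by linarith)]
            nlinarith
    nlinarith [hstep', h4]
  -- inverse facts
  have hinvH : ∀ x : X, Hinv (H x) = x := by
    intro x
    have := congrArg (fun f : X →L[ℝ] X => f x) hleft
    simpa using this
  have hHinv : ∀ x : X, H (Hinv x) = x := by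
    intro x
    have := congrArg (fun f : X →L[ℝ] X => f x) hright
    simpa using this
  -- ‖u‖² ≤ ‖Hinv‖ * ⟪Hu,u⟫
  have hnormu : ‖u‖ ^ 2 ≤ ‖Hinv‖ * ⟪H u, u⟫ := by
    rcases eq_or_ne u 0 with h0 | h0
    · simp [h0]
    · have e1 : ⟪H u, Hinv u⟫ = ‖u‖ ^ 2 := by
        rw [hHsa, hHinv, real_inner_self_eq_norm_sq]
      have e2 : ⟪H (Hinv u), Hinv u⟫ ≤ ‖Hinv‖ * ‖u‖ ^ 2 := by
        rw [hHinv]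
        calc ⟪u, Hinv u⟫ ≤ ‖u‖ * ‖Hinv u‖ := real_inner_le_norm _ _
          _ ≤ ‖u‖ * (‖Hinv‖ * ‖u‖) := by
              apply mul_le_mul_of_nonneg_left (Hinv.le_opNorm u) (norm_nonneg u)
          _ = ‖Hinv‖ * ‖u‖ ^ 2 := by ring
      have hcs := hCS u (Hinv u)
      rw [e1] at hcs
      have hnu : 0 < ‖u‖ := norm_pos_iff.mpr h0
      have h5 : ⟪H u, u⟫ * ⟪H (Hinv u), Hinv u⟫ ≤ ⟪H u, u⟫ * (‖Hinv‖ * ‖u‖ ^ 2) :=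
        mul_le_mul_of_nonneg_left e2 (hq_nonneg u)
      nlinarith [hcs, h5, hnu, mul_pos hnu hnu]
  -- ⟪Hu,u⟫ ≤ ⟪Hw,w⟫
  have hqz : ⟪H u, u⟫ ≤ ⟪H (z₁ - z₂), z₁ - z₂⟫ := by
    have hcs := hCS (z₁ - z₂) u
    nlinarith [hmain, hq_nonneg u, hq_nonneg (z₁ - z₂), hcs]
  have hqw : ⟪H (z₁ - z₂), z₁ - z₂⟫ ≤ ‖H‖ * ‖z₁ - z₂‖ ^ 2 := by
    calc ⟪H (z₁ - z₂), z₁ - z₂⟫ ≤ ‖H (z₁ - z₂)‖ * ‖z₁ - z₂‖ := real_inner_le_norm _ _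
      _ ≤ (‖H‖ * ‖z₁ - z₂‖) * ‖z₁ - z₂‖ :=
          mul_le_mul_of_nonneg_right (H.le_opNorm _) (norm_nonneg _)
      _ = ‖H‖ * ‖z₁ - z₂‖ ^ 2 := by ring
  have hHinv_nonneg : (0:ℝ) ≤ ‖Hinv‖ := norm_nonneg _
  have hfinal : ‖u‖ ^ 2 ≤ ‖H‖ * ‖Hinv‖ * ‖z₁ - z₂‖ ^ 2 := by
    calc ‖u‖ ^ 2 ≤ ‖Hinv‖ * ⟪H u, u⟫ := hnormu
      _ ≤ ‖Hinv‖ * ⟪H (z₁ - z₂), z₁ - z₂⟫ := mul_le_mul_of_nonneg_left hqz hHinv_nonneg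
      _ ≤ ‖Hinv‖ * (‖H‖ * ‖z₁ - z₂‖ ^ 2) := mul_le_mul_of_nonneg_left hqw hHinv_nonneg
      _ = ‖H‖ * ‖Hinv‖ * ‖z₁ - z₂‖ ^ 2 := by ring
  calc ‖p₁ - p₂‖ = Real.sqrt (‖u‖ ^ 2) := by
        rw [Real.sqrt_sq (norm_nonneg _)]
    _ ≤ Real.sqrt (‖H‖ * ‖Hinv‖ * ‖z₁ - z₂‖ ^ 2) := Real.sqrt_le_sqrt hfinal
    _ = Real.sqrt (‖H‖ * ‖Hinv‖) * ‖z₁ - z₂‖ := by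
        rw [Real.sqrt_mul (by positivity), Real.sqrt_sq (norm_nonneg _)]
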